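/- Let n, m ≥ 5. Then the ratio p_{n,m}(A_x, B_x) / tr(A_x^n · B_x^m) tends to +∞ as x → 0⁺; that is, for every C > 0 there exists δ > 0 such that for all x with 0 < x < δ one has p_{n,m}(A_x, B_x) > C · tr(A_x^n · B_x^m). -/

import Mathlib

open Matrix

/-- The matrix `A_x`. -/
def Amat (x : ℝ) : Matrix (Fin 3) (Fin 3) ℝ :=
  !![1, 0, 0; 0, x, -x; 0, -x, x]

/-- The matrix `B_x`. -/
def Bmat (x : ℝ) : Matrix (Fin 3) (Fin 3) ℝ :=
  !![x, -x, 0; -x, x, 0; 0, 0, 1]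

/-- The (finite) set `𝒲_{n,m}` of words with exactly `n` letters `A` (`true`)
and `m` letters `B` (`false`). -/
def words (n m : ℕ) : Finset (List Bool) :=
  (List.replicate n true ++ List.replicate m false).permutations.toFinset

/-- `tr w(A_x, B_x)`: the trace of the word `w` evaluated at `(A_x, B_x)`. -/
noncomputable def wtr (x : ℝ) (w : List Bool) : ℝ :=
  ((w.map fun b => if b = true then Amat x else Bmat x).prod).trace

/-- The averaged word trace `p_{n,m}(A_x, B_x)`. -/
noncomputable def pnm (n m : ℕ) (x : ℝ) : ℝ :=
  (1 / ((n + m).choose n)) * ∑ w ∈ words n m, wtr x w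

/-! ### Auxiliary lemmas -/

lemma Apow (x : ℝ) (k : ℕ) : Amat x ^ (k+1) =
    !![1, 0, 0; 0, 2^k*x^(k+1), -(2^k*x^(k+1)); 0, -(2^k*x^(k+1)), 2^k*x^(k+1)] := by
  induction k with
  | zero => simp [Amat]
  | succ k ih =>
    rw [pow_succ, ih]
    ext i j
    fin_cases i <;> fin_cases j <;>
      simp [Amat, Matrix.mul_fin_three] <;> ring

lemma Bpow (x : ℝ) (k : ℕ) : Bmat x ^ (k+1) =
    !![2^k*x^(k+1), -(2^k*x^(k+1)), 0; -(2^k*x^(k+1)), 2^k*x^(k+1), 0; 0, 0, 1] := by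
  induction k with
  | zero => simp [Bmat]
  | succ k ih =>
    rw [pow_succ, ih]
    ext i j
    fin_cases i <;> fin_cases j <;>
      simp [Bmat, Matrix.mul_fin_three] <;> ring

def Dmat : Matrix (Fin 3) (Fin 3) ℝ := !![1, 0, 0; 0, -1, 0; 0, 0, 1]

lemma Dmat_sq : Dmat * Dmat = 1 := by
  ext i j
  fin_cases i <;> fin_cases j <;>
    simp [Dmat, Matrix.mul_fin_three, Matrix.one_fin_three, Matrix.vecHead, Matrix.vecTail]

lemma conj_prod (l : List (Matrix (Fin 3) (Fin 3) ℝ)) :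
    Dmat * l.prod * Dmat = (l.map fun M => Dmat * M * Dmat).prod := by
  induction l with
  | nil => simp [Dmat_sq]
  | cons M l ih =>
    simp only [List.prod_cons, List.map_cons]
    rw [← ih]
    rw [show Dmat * (M * l.prod) * Dmat = (Dmat * M * Dmat) * (Dmat * (l.prod * Dmat)) by
      rw [← mul_assoc, ← mul_assoc, mul_assoc (Dmat*M) Dmat Dmat, Dmat_sq, mul_one, mul_assoc]]
    rw [← mul_assoc Dmat l.prod Dmat]

def NN (M : Matrix (Fin 3) (Fin 3) ℝ) : Prop := ∀ i j, 0 ≤ M i j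

lemma NN.mul {M N : Matrix (Fin 3) (Fin 3) ℝ} (hM : NN M) (hN : NN N) : NN (M * N) := by
  intro i j
  rw [Matrix.mul_apply]
  exact Finset.sum_nonneg fun k _ => mul_nonneg (hM i k) (hN k j)

lemma NN_prod (l : List (Matrix (Fin 3) (Fin 3) ℝ)) (h : ∀ M ∈ l, NN M) : NN l.prod := by
  induction l with
  | nil => intro i j; simp [Matrix.one_apply]; split <;> norm_num
  | cons M l ih =>
    rw [List.prod_cons]
    exact NN.mul (h M (by simp)) (ih fun M hM => h M (by simp [hM]))

lemma NN_conjA (x : ℝ) (hx : 0 ≤ x) : NN (Dmat * Amat x * Dmat) := by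
  intro i j
  fin_cases i <;> fin_cases j <;>
    simp [Dmat, Amat, Matrix.mul_fin_three, Matrix.vecHead, Matrix.vecTail] <;> linarith

lemma NN_conjB (x : ℝ) (hx : 0 ≤ x) : NN (Dmat * Bmat x * Dmat) := by
  intro i j
  fin_cases i <;> fin_cases j <;>
    simp [Dmat, Bmat, Matrix.mul_fin_three, Matrix.vecHead, Matrix.vecTail] <;> linarith

lemma wtr_nonneg (x : ℝ) (hx : 0 ≤ x) (w : List Bool) : 0 ≤ wtr x w := by
  unfold wtr
  set P := (w.map fun b => if b = true then Amat x else Bmat x).prod with hP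
  have h1 : (Dmat * P * Dmat).trace = P.trace := by
    rw [Matrix.trace_mul_cycle, Dmat_sq, one_mul]
  rw [← h1, hP, conj_prod, List.map_map]
  have h2 : NN ((w.map ((fun M => Dmat * M * Dmat) ∘
      fun b => if b = true then Amat x else Bmat x)).prod) := by
    apply NN_prod
    intro M hM
    simp only [List.mem_map, Function.comp] at hM
    obtain ⟨b, _, rfl⟩ := hM
    by_cases hb : b = true <;> simp [hb, NN_conjA x hx, NN_conjB x hx]
  rw [Matrix.trace_fin_three]
  have := h2 0 0; have := h2 1 1; have := h2 2 2
  linarith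

def W0 (n m : ℕ) : List Bool :=
  List.replicate (n-2) true ++ false :: true :: (List.replicate (m-2) false ++ [true, false])

lemma W0_mem (n m : ℕ) (hn : 5 ≤ n) (hm : 5 ≤ m) : W0 n m ∈ words n m := by
  simp only [words, List.mem_toFinset, List.mem_permutations]
  apply List.perm_iff_count.mpr
  intro b
  cases b <;>
    simp [W0, List.count_append, List.count_replicate, List.count_cons] <;> omega

lemma wtr_W0 (x : ℝ) (hx : 0 < x) (n m : ℕ) (hn : 5 ≤ n) (hm : 5 ≤ m) :
    x^4 ≤ wtr x (W0 n m) := by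
  obtain ⟨k, rfl⟩ : ∃ k, n = k + 3 := ⟨n-3, by omega⟩
  obtain ⟨l, rfl⟩ : ∃ l, m = l + 3 := ⟨m-3, by omega⟩
  unfold wtr W0
  simp only [List.map_append, List.map_replicate, List.map_cons, List.map_nil,
    List.prod_append, List.prod_cons, List.prod_nil, if_true, reduceIte,
    Bool.false_eq_true, if_false, mul_one]
  rw [show k+3-2 = k+1 from rfl, show l+3-2 = l+1 from rfl]
  rw [List.prod_replicate, List.prod_replicate, Apow, Bpow]
  set a := (2:ℝ)^k * x^(k+1) with ha
  set b := (2:ℝ)^l * x^(l+1) with hb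
  have ha0 : 0 ≤ a := by positivity
  have hb0 : 0 ≤ b := by positivity
  have hx0 : 0 ≤ x := hx.le
  rw [Amat, Bmat]
  simp only [Matrix.mul_fin_three, Matrix.trace_fin_three_of]
  nlinarith [mul_nonneg ha0 hb0, pow_nonneg hx0 2, pow_nonneg hx0 3, pow_nonneg hx0 4,
    mul_nonneg (mul_nonneg ha0 hb0) (pow_nonneg hx0 2),
    mul_nonneg (mul_nonneg ha0 hb0) (pow_nonneg hx0 3),
    mul_nonneg (mul_nonneg ha0 hb0) (pow_nonneg hx0 4),
    mul_nonneg ha0 (pow_nonneg hx0 2), mul_nonneg hb0 (pow_nonneg hx0 2),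
    mul_nonneg ha0 (pow_nonneg hx0 3), mul_nonneg hb0 (pow_nonneg hx0 3),
    mul_nonneg ha0 (pow_nonneg hx0 4), mul_nonneg hb0 (pow_nonneg hx0 4)]

theorem stmt_12 (n m : ℕ) (hn : 5 ≤ n) (hm : 5 ≤ m) :
    ∀ C : ℝ, 0 < C → ∃ δ : ℝ, 0 < δ ∧ ∀ x : ℝ, 0 < x → x < δ →
      C * (Amat x ^ n * Bmat x ^ m).trace < pnm n m x := by
  intro C hC
  obtain ⟨k, hk⟩ : ∃ k, n = k + 1 := ⟨n-1, by omega⟩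
  obtain ⟨l, hl⟩ : ∃ l, m = l + 1 := ⟨m-1, by omega⟩
  have hc0 : (0:ℝ) < ((n + m).choose n : ℝ) := by
    exact_mod_cast Nat.choose_pos (Nat.le_add_right n m)
  set c : ℝ := ((n + m).choose n : ℝ) with hc
  set K : ℝ := 2^k + 2^l + 2^k * 2^l with hKdef
  have hK : 0 < K := by positivity
  refine ⟨min 1 (1 / (C * K * c)), by positivity, ?_⟩
  intro x hx hxδ
  have hx1 : x < 1 := lt_of_lt_of_le hxδ (min_le_left _ _)
  have hx2 : x < 1 / (C * K * c) := lt_of_lt_of_le hxδ (min_le_right _ _)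
  -- trace formula
  have htr : (Amat x ^ n * Bmat x ^ m).trace
      = 2^k*x^n + 2^l*x^m + (2^k*x^n) * (2^l*x^m) := by
    rw [hk, hl, Apow, Bpow]
    simp only [Matrix.mul_fin_three, Matrix.trace_fin_three_of]
    ring
  -- bound the trace by K * x^5
  have hxn : x^n ≤ x^5 := pow_le_pow_of_le_one hx.le hx1.le hn
  have hxm : x^m ≤ x^5 := pow_le_pow_of_le_one hx.le hx1.le hm
  have hxnm : x^n * x^m ≤ x^5 := by
    rw [← pow_add]
    exact pow_le_pow_of_le_one hx.le hx1.le (by omega)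
  have htrb : (Amat x ^ n * Bmat x ^ m).trace ≤ K * x^5 := by
    rw [htr, hKdef]
    have h2k : (0:ℝ) < 2^k := by positivity
    have h2l : (0:ℝ) < 2^l := by positivity
    have h1 := mul_le_mul_of_nonneg_left hxn h2k.le
    have h2 := mul_le_mul_of_nonneg_left hxm h2l.le
    have h3 : 2^k * x^n * (2^l * x^m) ≤ 2^k * 2^l * x^5 := by
      have : 2^k * x^n * (2^l * x^m) = 2^k * 2^l * (x^n * x^m) := by ring
      rw [this]
      exact mul_le_mul_of_nonneg_left hxnm (by positivity)
    linarith
  -- lower bound for pnm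
  have hsum : x^4 ≤ ∑ w ∈ words n m, wtr x w :=
    le_trans (wtr_W0 x hx n m hn hm)
      (Finset.single_le_sum (fun w _ => wtr_nonneg x hx.le w) (W0_mem n m hn hm))
  have hpnm : (1/c) * x^4 ≤ pnm n m x := by
    unfold pnm
    rw [← hc]
    exact mul_le_mul_of_nonneg_left hsum (by positivity)
  -- key smallness
  have hkey : C * K * x < 1 / c := by
    have := (mul_lt_mul_of_pos_left hx2 (show (0:ℝ) < C * K by positivity))
    calc C * K * x < C * K * (1 / (C * K * c)) := this
    _ = 1 / c := by field_simp
  calc C * (Amat x ^ n * Bmat x ^ m).trace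
      ≤ C * (K * x^5) := mul_le_mul_of_nonneg_left htrb hC.le
    _ = (C * K * x) * x^4 := by ring
    _ < (1/c) * x^4 := mul_lt_mul_of_pos_right hkey (by positivity)
    _ ≤ pnm n m x := hpnm
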